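/- Let C_{2ℓ+1}(T_{n-2ℓ,2}) denote the graph obtained by identifying one vertex of a cycle of length 2ℓ+1 with a vertex in the smaller part of the complete bipartite Turán graph T_{n-2ℓ,2}. If ℓ < t are positive integers (with n large enough that all graphs are defined), then λ(C_{2t+1}(T_{n-2t,2})) < λ(C_{2ℓ+1}(T_{n-2ℓ,2})). -/

import Mathlib

open Classical in
noncomputable def adjMat {V : Type*} [Fintype V] (G : SimpleGraph V) : Matrix V V ℝ :=
  Matrix.of fun i j => if G.Adj i j then 1 else 0

theorem adjMat_isHermitian {V : Type*} [Fintype V] (G : SimpleGraph V) :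
    (adjMat G).IsHermitian := by
  ext i j
  simp only [adjMat, Matrix.conjTranspose_apply, Matrix.of_apply, starRingEnd_apply]
  rw [G.adj_comm]
  simp

/-- Spectral radius: the largest adjacency eigenvalue. -/
noncomputable def specRad {V : Type*} [Fintype V] [DecidableEq V] (G : SimpleGraph V) : ℝ :=
  ⨆ i, (adjMat_isHermitian G).eigenvalues i

/-- `G` contains a cycle of length `ℓ`. -/
def hasCycle {V : Type*} (G : SimpleGraph V) (ℓ : ℕ) : Prop :=
  ∃ (v : V) (w : G.Walk v v), w.IsCycle ∧ w.length = ℓ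

/-- `cycleTuran n ℓ` is the graph `C_{2ℓ+1}(T_{n-2ℓ,2})` on `n` vertices: a complete bipartite
Turán graph `T_{n-2ℓ,2}` with parts `{0, …, ⌊(n-2ℓ)/2⌋ - 1}` (the smaller part) and
`{⌊(n-2ℓ)/2⌋, …, n-2ℓ-1}`, together with a cycle of length `2ℓ+1` through the vertices
`0, n-2ℓ, n-2ℓ+1, …, n-1, 0`, identified with the Turán graph at the vertex `0` of the
smaller part. -/
def cycleTuran (n ℓ : ℕ) : SimpleGraph (Fin n) :=
  SimpleGraph.fromRel (fun i j =>
    (i.val < (n - 2 * ℓ) / 2 ∧ (n - 2 * ℓ) / 2 ≤ j.val ∧ j.val < n - 2 * ℓ) ∨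
    (i.val = 0 ∧ j.val = n - 2 * ℓ ∧ 1 ≤ ℓ) ∨
    (n - 2 * ℓ ≤ i.val ∧ j.val = i.val + 1) ∨
    (i.val = 0 ∧ j.val = n - 1 ∧ 1 ≤ ℓ))

open Matrix in
lemma adjMat_nonneg {V : Type*} [Fintype V] (G : SimpleGraph V) (i j : V) :
    0 ≤ adjMat G i j := by
  simp only [adjMat, Matrix.of_apply]; split <;> norm_num

open Matrix

lemma rayleigh_le_specRad {N : ℕ} (hN : 0 < N) (G : SimpleGraph (Fin N)) (x : Fin N → ℝ) :
    x ⬝ᵥ (adjMat G *ᵥ x) ≤ specRad G * (x ⬝ᵥ x) := by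
  have : Nonempty (Fin N) := ⟨⟨0, hN⟩⟩
  set A := adjMat G with hA
  have hHerm := adjMat_isHermitian G
  set U : Matrix (Fin N) (Fin N) ℝ := (hHerm.eigenvectorUnitary : Matrix (Fin N) (Fin N) ℝ)
    with hU
  have hstar : star U = Uᵀ := by
    ext i j; simp [Matrix.conjTranspose_apply]
  have hspec : A = U * Matrix.diagonal hHerm.eigenvalues * Uᵀ := by
    have := hHerm.spectral_theorem
    rwa [RCLike.ofReal_real_eq_id, Function.id_comp, Unitary.conjStarAlgAut_apply,
      hstar] at this
  have hUU : U * Uᵀ = 1 := by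
    rw [← hstar]; exact Matrix.mem_unitaryGroup_iff.mp (hHerm.eigenvectorUnitary).2
  set y : Fin N → ℝ := Uᵀ *ᵥ x with hy
  have hxy : x ᵥ* U = y := by rw [hy, Matrix.mulVec_transpose]
  have key1 : x ⬝ᵥ (A *ᵥ x) = ∑ i, hHerm.eigenvalues i * (y i)^2 := by
    rw [hspec]
    rw [← Matrix.mulVec_mulVec, ← Matrix.mulVec_mulVec, Matrix.dotProduct_mulVec, hxy]
    rw [show Uᵀ *ᵥ x = y from rfl]
    simp only [dotProduct, Matrix.mulVec_diagonal]
    apply Finset.sum_congr rfl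
    intro i _
    ring
  have key2 : x ⬝ᵥ x = ∑ i, (y i)^2 := by
    have h1 : U *ᵥ y = x := by
      rw [hy, Matrix.mulVec_mulVec, hUU, Matrix.one_mulVec]
    have h2 : y ⬝ᵥ y = x ⬝ᵥ x := by
      calc y ⬝ᵥ y = (x ᵥ* U) ⬝ᵥ y := by rw [hxy]
        _ = x ⬝ᵥ (U *ᵥ y) := (Matrix.dotProduct_mulVec x U y).symm
        _ = x ⬝ᵥ x := by rw [h1]
    rw [← h2]
    simp [dotProduct, sq]
  rw [key1, key2, Finset.mul_sum]
  apply Finset.sum_le_sum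
  intro i _
  have h1 : hHerm.eigenvalues i ≤ specRad G :=
    le_ciSup (Set.Finite.bddAbove (Set.finite_range _)) i
  nlinarith [sq_nonneg (y i)]

lemma specRad_le_of_mulVec_le {N : ℕ} (hN : 0 < N) (G : SimpleGraph (Fin N))
    (w : Fin N → ℝ) (M : ℝ) (hw : ∀ i, 0 < w i)
    (h : ∀ i, (adjMat G *ᵥ w) i ≤ M * w i) : specRad G ≤ M := by
  have : Nonempty (Fin N) := ⟨⟨0, hN⟩⟩
  have hHerm := adjMat_isHermitian G
  obtain ⟨i₀, hi₀⟩ := Finite.exists_max hHerm.eigenvalues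
  have hsr : specRad G = hHerm.eigenvalues i₀ :=
    le_antisymm (ciSup_le hi₀) (le_ciSup (Set.Finite.bddAbove (Set.finite_range _)) i₀)
  set lam := hHerm.eigenvalues i₀ with hlam
  set v : Fin N → ℝ := ⇑(hHerm.eigenvectorBasis i₀) with hv
  have hev : adjMat G *ᵥ v = lam • v := hHerm.mulVec_eigenvectorBasis i₀
  have hvne : ∃ k, v k ≠ 0 := by
    by_contra hcon
    push_neg at hcon
    have : hHerm.eigenvectorBasis i₀ = 0 := by
      apply PiLp.ext; intro k; exact hcon k
    exact hHerm.eigenvectorBasis.orthonormal.ne_zero i₀ this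
  obtain ⟨i, hi⟩ := Finite.exists_max (fun k => |v k| / w k)
  have hipos : 0 < |v i| / w i := by
    obtain ⟨k, hk⟩ := hvne
    exact lt_of_lt_of_le (div_pos (abs_pos.mpr hk) (hw k)) (hi k)
  have hvipos : 0 < |v i| := by
    by_contra hc
    push_neg at hc
    rw [div_pos_iff] at hipos
    rcases hipos with ⟨h1, _⟩ | ⟨_, h2⟩
    · linarith
    · linarith [(hw i).le]
  have key : |lam| * |v i| ≤ M * |v i| := by
    have h1 : |lam * v i| = |(adjMat G *ᵥ v) i| := by rw [hev]; simp [abs_mul]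
    have h2 : |(adjMat G *ᵥ v) i| ≤ ∑ j, adjMat G i j * |v j| := by
      simp only [Matrix.mulVec, dotProduct]
      refine le_trans (Finset.abs_sum_le_sum_abs _ _) ?_
      apply Finset.sum_le_sum
      intro j _
      rw [abs_mul, abs_of_nonneg (adjMat_nonneg G i j)]
    have h3 : ∀ j, adjMat G i j * |v j| ≤ adjMat G i j * ((|v i| / w i) * w j) := by
      intro j
      apply mul_le_mul_of_nonneg_left _ (adjMat_nonneg G i j)
      calc |v j| = |v j| / w j * w j := (div_mul_cancel₀ _ (hw j).ne').symm
        _ ≤ |v i| / w i * w j := mul_le_mul_of_nonneg_right (hi j) (hw j).le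
    have h4 : ∑ j, adjMat G i j * ((|v i| / w i) * w j)
        = (|v i| / w i) * (adjMat G *ᵥ w) i := by
      simp only [Matrix.mulVec, dotProduct, Finset.mul_sum]
      apply Finset.sum_congr rfl; intro j _; ring
    have h5 : (|v i| / w i) * (adjMat G *ᵥ w) i ≤ (|v i| / w i) * (M * w i) :=
      mul_le_mul_of_nonneg_left (h i) (le_of_lt hipos)
    have h6 : (|v i| / w i) * (M * w i) = M * |v i| := by
      have hne : w i ≠ 0 := (hw i).ne'
      field_simp
    calc |lam| * |v i| = |lam * v i| := by rw [abs_mul]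
      _ = |(adjMat G *ᵥ v) i| := h1
      _ ≤ ∑ j, adjMat G i j * |v j| := h2
      _ ≤ ∑ j, adjMat G i j * ((|v i| / w i) * w j) := Finset.sum_le_sum fun j _ => h3 j
      _ = (|v i| / w i) * (adjMat G *ᵥ w) i := h4
      _ ≤ (|v i| / w i) * (M * w i) := h5
      _ = M * |v i| := h6
  have : |lam| ≤ M := le_of_mul_le_mul_right (by linarith [key]) hvipos
  calc specRad G = lam := hsr
    _ ≤ |lam| := le_abs_self lam
    _ ≤ M := this

lemma sum_ite_Ico {N : ℕ} (l u : ℕ) (hu : u ≤ N) (c : ℝ) :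
    ∑ j : Fin N, (if l ≤ j.val ∧ j.val < u then c else 0) = (u - l : ℕ) * c := by
  rw [Fin.sum_univ_eq_sum_range (fun j => if l ≤ j ∧ j < u then c else 0)]
  rw [← Finset.sum_filter]
  have h : (Finset.range N).filter (fun j => l ≤ j ∧ j < u) = Finset.Ico l u := by
    ext j
    simp only [Finset.mem_filter, Finset.mem_range, Finset.mem_Ico]
    omega
  rw [h, Finset.sum_const, Nat.card_Ico, nsmul_eq_mul]

lemma sum_ite_single {N : ℕ} (k : ℕ) (hk : k < N) (c : ℝ) :
    ∑ j : Fin N, (if j.val = k then c else 0) = c := by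
  rw [Fin.sum_univ_eq_sum_range (fun j => if j = k then c else 0)]
  rw [Finset.sum_ite_eq' (Finset.range N) k (fun _ => c), if_pos (Finset.mem_range.mpr hk)]

set_option maxHeartbeats 2000000 in
lemma upper_bound {n t : ℕ} (ht : 2 ≤ t) (hn : 2*t + 2 ≤ n) (M : ℝ) (hM2 : 2 ≤ M)
    (hMsq : (((n-2*t)/2 * (n-2*t - (n-2*t)/2) : ℕ) : ℝ) + 4 ≤ M^2) :
    specRad (cycleTuran n t) ≤ M := by
  set m : ℕ := n - 2*t with hm_def
  set a : ℕ := m / 2 with ha_def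
  set b : ℕ := m - a with hb_def
  have ham : 1 ≤ a ∧ a < m ∧ m + 2 ≤ n ∧ b = m - a ∧ a = m/2 ∧ m = n - 2*t := by omega
  set p : ℝ := M * (M - 1) with hp_def
  set q : ℝ := (a : ℕ) * (M - 1) with hq_def
  set r : ℝ := M with hr_def
  have hM1 : (1:ℝ) ≤ M - 1 := by linarith
  have hp : 0 < p := by
    have : (0:ℝ) < M := by linarith
    have h2 : (0:ℝ) < M - 1 := by linarith
    exact mul_pos this h2
  have hq : 0 < q := by
    have h1 : (0:ℝ) < (a:ℝ) := by
      have := ham.1; positivity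
    nlinarith
  have hr : 0 < r := by simp only [hr_def]; linarith
  have hab : ((a*b : ℕ) : ℝ) + 4 ≤ M^2 := by
    convert hMsq using 3 <;> omega
  have c1 : (b:ℝ) * q + (r + r) ≤ M * p := by
    have hcast : (b:ℝ) * q = ((a*b:ℕ):ℝ) * (M-1) := by
      push_cast; ring
    rw [hcast, hp_def, hr_def]
    nlinarith [mul_nonneg (sub_nonneg.mpr hab) (by linarith : (0:ℝ) ≤ M - 1)]
  have c2 : (a:ℝ) * p ≤ M * q := le_of_eq (by rw [hp_def, hq_def]; ring)
  have c3 : p + r ≤ M * r := le_of_eq (by rw [hp_def, hr_def]; ring)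
  have c4 : r + r ≤ M * r := by rw [hr_def]; nlinarith
  set w : Fin n → ℝ := fun j => if j.val < a then p else if j.val < m then q else r with hw_def
  have hw : ∀ i, 0 < w i := by
    intro i; simp only [hw_def]; split_ifs <;> assumption
  apply specRad_le_of_mulVec_le (by omega) _ w M hw
  intro i
  have hiLt := i.isLt
  have hAsum : (adjMat (cycleTuran n t) *ᵥ w) i = ∑ j, adjMat (cycleTuran n t) i j * w j := rfl
  by_cases h1 : i.val < a
  · -- small part
    have hwi : w i = p := by simp only [hw_def]; rw [if_pos h1]
    rw [hwi]
    by_cases h0 : i.val = 0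
    · have key : ∀ j : Fin n, adjMat (cycleTuran n t) i j * w j ≤
          (if a ≤ j.val ∧ j.val < m then q else 0)
          + ((if j.val = m then r else 0) + (if j.val = n-1 then r else 0)) := by
        intro j
        have hjLt := j.isLt
        simp only [adjMat, Matrix.of_apply, cycleTuran, SimpleGraph.fromRel_adj, ne_eq,
          Fin.ext_iff, hw_def]
        split_ifs <;> first | (exfalso; omega) | linarith
      calc (adjMat (cycleTuran n t) *ᵥ w) i
          = ∑ j, adjMat (cycleTuran n t) i j * w j := hAsum
        _ ≤ ∑ j, ((if a ≤ j.val ∧ j.val < m then q else 0)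
            + ((if j.val = m then r else 0) + (if j.val = n-1 then r else 0))) :=
            Finset.sum_le_sum fun j _ => key j
        _ = ((m - a : ℕ) : ℝ) * q + (r + r) := by
            rw [Finset.sum_add_distrib, Finset.sum_add_distrib,
              sum_ite_Ico a m (by omega) q, sum_ite_single m (by omega) r,
              sum_ite_single (n-1) (by omega) r]
        _ ≤ M * p := by
            have : ((m - a : ℕ) : ℝ) = (b : ℝ) := by rw [hb_def]
            rw [this]; exact c1
    · have key : ∀ j : Fin n, adjMat (cycleTuran n t) i j * w j ≤
          (if a ≤ j.val ∧ j.val < m then q else 0) := by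
        intro j
        have hjLt := j.isLt
        simp only [adjMat, Matrix.of_apply, cycleTuran, SimpleGraph.fromRel_adj, ne_eq,
          Fin.ext_iff, hw_def]
        split_ifs <;> first | (exfalso; omega) | linarith
      calc (adjMat (cycleTuran n t) *ᵥ w) i
          = ∑ j, adjMat (cycleTuran n t) i j * w j := hAsum
        _ ≤ ∑ j, (if a ≤ j.val ∧ j.val < m then q else 0) :=
            Finset.sum_le_sum fun j _ => key j
        _ = ((m - a : ℕ) : ℝ) * q := sum_ite_Ico a m (by omega) q
        _ ≤ M * p := by
            have hbb : ((m - a : ℕ) : ℝ) = (b : ℝ) := by rw [hb_def]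
            rw [hbb]; nlinarith
  · by_cases h2 : i.val < m
    · -- large part
      have hwi : w i = q := by simp only [hw_def]; rw [if_neg h1, if_pos h2]
      rw [hwi]
      have key : ∀ j : Fin n, adjMat (cycleTuran n t) i j * w j ≤
          (if 0 ≤ j.val ∧ j.val < a then p else 0) := by
        intro j
        have hjLt := j.isLt
        simp only [adjMat, Matrix.of_apply, cycleTuran, SimpleGraph.fromRel_adj, ne_eq,
          Fin.ext_iff, hw_def]
        split_ifs <;> first | (exfalso; omega) | linarith
      calc (adjMat (cycleTuran n t) *ᵥ w) i
          = ∑ j, adjMat (cycleTuran n t) i j * w j := hAsum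
        _ ≤ ∑ j, (if 0 ≤ j.val ∧ j.val < a then p else 0) :=
            Finset.sum_le_sum fun j _ => key j
        _ = ((a - 0 : ℕ) : ℝ) * p := sum_ite_Ico 0 a (by omega) p
        _ ≤ M * q := by
            have : ((a - 0 : ℕ) : ℝ) = (a : ℝ) := by norm_num
            rw [this]; exact c2
    · -- cycle part
      have hwi : w i = r := by simp only [hw_def]; rw [if_neg h1, if_neg h2]
      rw [hwi]
      by_cases h3 : i.val = m
      · have key : ∀ j : Fin n, adjMat (cycleTuran n t) i j * w j ≤
            (if j.val = 0 then p else 0) + (if j.val = m + 1 then r else 0) := by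
          intro j
          have hjLt := j.isLt
          simp only [adjMat, Matrix.of_apply, cycleTuran, SimpleGraph.fromRel_adj, ne_eq,
            Fin.ext_iff, hw_def]
          split_ifs <;> first | (exfalso; omega) | linarith
        calc (adjMat (cycleTuran n t) *ᵥ w) i
            = ∑ j, adjMat (cycleTuran n t) i j * w j := hAsum
          _ ≤ ∑ j, ((if j.val = 0 then p else 0) + (if j.val = m + 1 then r else 0)) :=
              Finset.sum_le_sum fun j _ => key j
          _ = p + r := by
              rw [Finset.sum_add_distrib, sum_ite_single 0 (by omega) p,
                sum_ite_single (m+1) (by omega) r]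
          _ ≤ M * r := c3
      · by_cases h4 : i.val = n - 1
        · have key : ∀ j : Fin n, adjMat (cycleTuran n t) i j * w j ≤
              (if j.val = 0 then p else 0) + (if j.val = n - 2 then r else 0) := by
            intro j
            have hjLt := j.isLt
            simp only [adjMat, Matrix.of_apply, cycleTuran, SimpleGraph.fromRel_adj, ne_eq,
              Fin.ext_iff, hw_def]
            split_ifs <;> first | (exfalso; omega) | linarith
          calc (adjMat (cycleTuran n t) *ᵥ w) i
              = ∑ j, adjMat (cycleTuran n t) i j * w j := hAsum
            _ ≤ ∑ j, ((if j.val = 0 then p else 0) + (if j.val = n - 2 then r else 0)) :=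
                Finset.sum_le_sum fun j _ => key j
            _ = p + r := by
                rw [Finset.sum_add_distrib, sum_ite_single 0 (by omega) p,
                  sum_ite_single (n-2) (by omega) r]
            _ ≤ M * r := c3
        · have key : ∀ j : Fin n, adjMat (cycleTuran n t) i j * w j ≤
              (if j.val = i.val - 1 then r else 0) + (if j.val = i.val + 1 then r else 0) := by
            intro j
            have hjLt := j.isLt
            simp only [adjMat, Matrix.of_apply, cycleTuran, SimpleGraph.fromRel_adj, ne_eq,
              Fin.ext_iff, hw_def]
            split_ifs <;> first | (exfalso; omega) | linarith
          calc (adjMat (cycleTuran n t) *ᵥ w) i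
              = ∑ j, adjMat (cycleTuran n t) i j * w j := hAsum
            _ ≤ ∑ j, ((if j.val = i.val - 1 then r else 0)
                + (if j.val = i.val + 1 then r else 0)) :=
                Finset.sum_le_sum fun j _ => key j
            _ = r + r := by
                rw [Finset.sum_add_distrib, sum_ite_single (i.val-1) (by omega) r,
                  sum_ite_single (i.val+1) (by omega) r]
            _ ≤ M * r := c4

set_option maxHeartbeats 2000000 in
lemma lower_gen {n ℓ : ℕ} (hℓ : 1 ≤ ℓ) (hn : 2*ℓ + 2 ≤ n) :
    ((2 * ((n-2*ℓ)/2) * ((n-2*ℓ) - (n-2*ℓ)/2) : ℕ) : ℝ)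
      ≤ specRad (cycleTuran n ℓ) * ((n - 2*ℓ : ℕ) : ℝ) := by
  set m' : ℕ := n - 2*ℓ with hm_def
  set a' : ℕ := m' / 2 with ha_def
  set b' : ℕ := m' - a' with hb_def
  set x : Fin n → ℝ := fun j => if j.val < m' then (1:ℝ) else 0 with hx_def
  set A := adjMat (cycleTuran n ℓ) with hA_def
  have hxx : x ⬝ᵥ x = (m' : ℝ) := by
    have hpt : ∀ j : Fin n, x j * x j = if 0 ≤ j.val ∧ j.val < m' then (1:ℝ) else 0 := by
      intro j
      simp only [hx_def]
      split_ifs <;> first | (exfalso; omega) | norm_num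
    calc x ⬝ᵥ x = ∑ j, x j * x j := rfl
      _ = ∑ j : Fin n, (if 0 ≤ j.val ∧ j.val < m' then (1:ℝ) else 0) :=
          Finset.sum_congr rfl fun j _ => hpt j
      _ = ((m' - 0 : ℕ) : ℝ) * 1 := sum_ite_Ico 0 m' (by omega) 1
      _ = (m' : ℝ) := by norm_num
  have inner_s : ∀ i : Fin n, i.val < a' → ((b' : ℕ) : ℝ) ≤ (A *ᵥ x) i := by
    intro i hi
    have hpt : ∀ j : Fin n, (if a' ≤ j.val ∧ j.val < m' then (1:ℝ) else 0) ≤ A i j * x j := by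
      intro j
      have hjLt := j.isLt
      simp only [hA_def, adjMat, Matrix.of_apply, cycleTuran, SimpleGraph.fromRel_adj, ne_eq,
        Fin.ext_iff, hx_def]
      split_ifs <;> first | (exfalso; omega) | norm_num
    calc ((b' : ℕ) : ℝ) = ((m' - a' : ℕ) : ℝ) * 1 := by rw [hb_def]; norm_num
      _ = ∑ j : Fin n, (if a' ≤ j.val ∧ j.val < m' then (1:ℝ) else 0) :=
          (sum_ite_Ico a' m' (by omega) 1).symm
      _ ≤ ∑ j : Fin n, A i j * x j := Finset.sum_le_sum fun j _ => hpt j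
      _ = (A *ᵥ x) i := rfl
  have inner_l : ∀ i : Fin n, a' ≤ i.val → i.val < m' → ((a' : ℕ) : ℝ) ≤ (A *ᵥ x) i := by
    intro i hi1 hi2
    have hpt : ∀ j : Fin n, (if 0 ≤ j.val ∧ j.val < a' then (1:ℝ) else 0) ≤ A i j * x j := by
      intro j
      have hjLt := j.isLt
      simp only [hA_def, adjMat, Matrix.of_apply, cycleTuran, SimpleGraph.fromRel_adj, ne_eq,
        Fin.ext_iff, hx_def]
      split_ifs <;> first | (exfalso; omega) | norm_num
    calc ((a' : ℕ) : ℝ) = ((a' - 0 : ℕ) : ℝ) * 1 := by norm_num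
      _ = ∑ j : Fin n, (if 0 ≤ j.val ∧ j.val < a' then (1:ℝ) else 0) :=
          (sum_ite_Ico 0 a' (by omega) 1).symm
      _ ≤ ∑ j : Fin n, A i j * x j := Finset.sum_le_sum fun j _ => hpt j
      _ = (A *ᵥ x) i := rfl
  have hsum : ∑ i : Fin n, ((if 0 ≤ i.val ∧ i.val < a' then ((b' : ℕ) : ℝ) else 0)
      + (if a' ≤ i.val ∧ i.val < m' then ((a' : ℕ) : ℝ) else 0))
      = ((2 * a' * b' : ℕ) : ℝ) := by
    rw [Finset.sum_add_distrib, sum_ite_Ico 0 a' (by omega) _, sum_ite_Ico a' m' (by omega) _]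
    have e : m' - a' = b' := rfl
    rw [e]
    push_cast [Nat.sub_zero]
    ring
  have hper : ∀ i : Fin n, (if 0 ≤ i.val ∧ i.val < a' then ((b' : ℕ) : ℝ) else 0)
      + (if a' ≤ i.val ∧ i.val < m' then ((a' : ℕ) : ℝ) else 0) ≤ x i * (A *ᵥ x) i := by
    intro i
    by_cases h1 : i.val < a'
    · rw [if_pos (by omega), if_neg (by omega)]
      have hxi : x i = 1 := by simp only [hx_def]; rw [if_pos (by omega)]
      rw [hxi, one_mul, add_zero]
      exact inner_s i h1
    · by_cases h2 : i.val < m'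
      · rw [if_neg (by omega), if_pos (by omega)]
        have hxi : x i = 1 := by simp only [hx_def]; rw [if_pos (by omega)]
        rw [hxi, one_mul, zero_add]
        exact inner_l i (by omega) h2
      · rw [if_neg (by omega), if_neg (by omega)]
        have hxi : x i = 0 := by simp only [hx_def]; rw [if_neg (by omega)]
        rw [hxi, zero_mul]
        norm_num
  have hcast : ((2 * ((n-2*ℓ)/2) * ((n-2*ℓ) - (n-2*ℓ)/2) : ℕ) : ℝ) = ((2 * a' * b' : ℕ) : ℝ) := by
    norm_cast
  rw [hcast]
  calc ((2 * a' * b' : ℕ) : ℝ)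
      = ∑ i : Fin n, ((if 0 ≤ i.val ∧ i.val < a' then ((b' : ℕ) : ℝ) else 0)
        + (if a' ≤ i.val ∧ i.val < m' then ((a' : ℕ) : ℝ) else 0)) := hsum.symm
    _ ≤ ∑ i : Fin n, x i * (A *ᵥ x) i := Finset.sum_le_sum fun i _ => hper i
    _ = x ⬝ᵥ (A *ᵥ x) := rfl
    _ ≤ specRad (cycleTuran n ℓ) * (x ⬝ᵥ x) := rayleigh_le_specRad (by omega) _ x
    _ = specRad (cycleTuran n ℓ) * (m' : ℝ) := by rw [hxx]

set_option maxHeartbeats 4000000 in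
lemma lower_special {n ℓ : ℕ} (hℓ : 1 ≤ ℓ) (hm' : n - 2*ℓ = 4 ∨ n - 2*ℓ = 5)
    (hn : 2*ℓ + 4 ≤ n) (p r q u : ℝ) (hp : 0 ≤ p) (hr : 0 ≤ r) (hq : 0 ≤ q) (hu : 0 ≤ u) :
    2*(((n-2*ℓ-2 : ℕ):ℝ)*p*q + ((n-2*ℓ-2 : ℕ):ℝ)*r*q + 2*p*u)
      ≤ specRad (cycleTuran n ℓ) * (p^2 + r^2 + ((n-2*ℓ-2:ℕ):ℝ)*q^2 + 2*u^2) := by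
  set m' : ℕ := n - 2*ℓ with hm_def
  set B : ℕ := m' - 2 with hB_def
  set x : Fin n → ℝ := fun j => if j.val = 0 then p else if j.val = 1 then r
    else if j.val < m' then q else if j.val = m' then u else if j.val = n-1 then u else 0
    with hx_def
  set A := adjMat (cycleTuran n ℓ) with hA_def
  have hxpt : ∀ j : Fin n, 0 ≤ x j := by
    intro j
    simp only [hx_def]
    split_ifs <;> first | exact hp | exact hr | exact hq | exact hu | norm_num
  have hxx : x ⬝ᵥ x = p^2 + (r^2 + ((B:ℝ)*q^2 + (u^2 + u^2))) := by
    have hpt : ∀ j : Fin n, x j * x j = (if j.val = 0 then p^2 else 0)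
        + ((if j.val = 1 then r^2 else 0) + ((if 2 ≤ j.val ∧ j.val < m' then q^2 else 0)
        + ((if j.val = m' then u^2 else 0) + (if j.val = n-1 then u^2 else 0)))) := by
      intro j
      have hjLt := j.isLt
      simp only [hx_def]
      split_ifs <;> first | (exfalso; omega) | ring
    calc x ⬝ᵥ x = ∑ j, x j * x j := rfl
      _ = ∑ j : Fin n, ((if j.val = 0 then p^2 else 0)
          + ((if j.val = 1 then r^2 else 0) + ((if 2 ≤ j.val ∧ j.val < m' then q^2 else 0)
          + ((if j.val = m' then u^2 else 0) + (if j.val = n-1 then u^2 else 0))))) :=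
          Finset.sum_congr rfl fun j _ => hpt j
      _ = p^2 + (r^2 + (((m' - 2 : ℕ):ℝ)*q^2 + (u^2 + u^2))) := by
          rw [Finset.sum_add_distrib, Finset.sum_add_distrib, Finset.sum_add_distrib,
            Finset.sum_add_distrib, sum_ite_single 0 (by omega) (p^2),
            sum_ite_single 1 (by omega) (r^2), sum_ite_Ico 2 m' (by omega) (q^2),
            sum_ite_single m' (by omega) (u^2), sum_ite_single (n-1) (by omega) (u^2)]
      _ = p^2 + (r^2 + ((B:ℝ)*q^2 + (u^2 + u^2))) := by rw [hB_def]
  have inner0 : ∀ i : Fin n, i.val = 0 → (B:ℝ)*q + (u + u) ≤ (A *ᵥ x) i := by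
    intro i hi
    have hpt : ∀ j : Fin n, (if 2 ≤ j.val ∧ j.val < m' then q else 0)
        + ((if j.val = m' then u else 0) + (if j.val = n-1 then u else 0)) ≤ A i j * x j := by
      intro j
      have hjLt := j.isLt
      simp only [hA_def, adjMat, Matrix.of_apply, cycleTuran, SimpleGraph.fromRel_adj, ne_eq,
        Fin.ext_iff, hx_def]
      split_ifs <;> first | (exfalso; omega) | linarith
    calc (B:ℝ)*q + (u + u) = ((m' - 2:ℕ):ℝ)*q + (u + u) := by rw [hB_def]
      _ = ∑ j : Fin n, ((if 2 ≤ j.val ∧ j.val < m' then q else 0)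
          + ((if j.val = m' then u else 0) + (if j.val = n-1 then u else 0))) := by
          rw [Finset.sum_add_distrib, Finset.sum_add_distrib,
            sum_ite_Ico 2 m' (by omega) q, sum_ite_single m' (by omega) u,
            sum_ite_single (n-1) (by omega) u]
      _ ≤ ∑ j : Fin n, A i j * x j := Finset.sum_le_sum fun j _ => hpt j
      _ = (A *ᵥ x) i := rfl
  have inner1 : ∀ i : Fin n, i.val = 1 → (B:ℝ)*q ≤ (A *ᵥ x) i := by
    intro i hi
    have hpt : ∀ j : Fin n, (if 2 ≤ j.val ∧ j.val < m' then q else 0) ≤ A i j * x j := by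
      intro j
      have hjLt := j.isLt
      simp only [hA_def, adjMat, Matrix.of_apply, cycleTuran, SimpleGraph.fromRel_adj, ne_eq,
        Fin.ext_iff, hx_def]
      split_ifs <;> first | (exfalso; omega) | linarith
    calc (B:ℝ)*q = ((m' - 2:ℕ):ℝ)*q := by rw [hB_def]
      _ = ∑ j : Fin n, (if 2 ≤ j.val ∧ j.val < m' then q else 0) :=
          (sum_ite_Ico 2 m' (by omega) q).symm
      _ ≤ ∑ j : Fin n, A i j * x j := Finset.sum_le_sum fun j _ => hpt j
      _ = (A *ᵥ x) i := rfl
  have innerL : ∀ i : Fin n, 2 ≤ i.val → i.val < m' → p + r ≤ (A *ᵥ x) i := by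
    intro i hi1 hi2
    have hpt : ∀ j : Fin n, (if j.val = 0 then p else 0) + (if j.val = 1 then r else 0)
        ≤ A i j * x j := by
      intro j
      have hjLt := j.isLt
      simp only [hA_def, adjMat, Matrix.of_apply, cycleTuran, SimpleGraph.fromRel_adj, ne_eq,
        Fin.ext_iff, hx_def]
      split_ifs <;> first | (exfalso; omega) | linarith
    calc p + r = ∑ j : Fin n, ((if j.val = 0 then p else 0) + (if j.val = 1 then r else 0)) := by
          rw [Finset.sum_add_distrib, sum_ite_single 0 (by omega) p,
            sum_ite_single 1 (by omega) r]
      _ ≤ ∑ j : Fin n, A i j * x j := Finset.sum_le_sum fun j _ => hpt j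
      _ = (A *ᵥ x) i := rfl
  have innerM : ∀ i : Fin n, (i.val = m' ∨ i.val = n - 1) → p ≤ (A *ᵥ x) i := by
    intro i hi
    have hpt : ∀ j : Fin n, (if j.val = 0 then p else 0) ≤ A i j * x j := by
      intro j
      have hjLt := j.isLt
      simp only [hA_def, adjMat, Matrix.of_apply, cycleTuran, SimpleGraph.fromRel_adj, ne_eq,
        Fin.ext_iff, hx_def]
      split_ifs <;> first | (exfalso; omega) | linarith
    calc p = ∑ j : Fin n, (if j.val = 0 then p else 0) := (sum_ite_single 0 (by omega) p).symm
      _ ≤ ∑ j : Fin n, A i j * x j := Finset.sum_le_sum fun j _ => hpt j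
      _ = (A *ᵥ x) i := rfl
  have hper : ∀ i : Fin n, (if i.val = 0 then p * ((B:ℝ)*q + (u+u)) else 0)
      + ((if i.val = 1 then r * ((B:ℝ)*q) else 0)
      + ((if 2 ≤ i.val ∧ i.val < m' then q * (p + r) else 0)
      + ((if i.val = m' then u * p else 0) + (if i.val = n-1 then u * p else 0))))
      ≤ x i * (A *ᵥ x) i := by
    intro i
    have hiLt := i.isLt
    by_cases h0 : i.val = 0
    · rw [if_pos h0, if_neg (by omega), if_neg (by omega), if_neg (by omega),
        if_neg (by omega)]
      have hxi : x i = p := by simp only [hx_def]; rw [if_pos h0]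
      rw [hxi]
      have := mul_le_mul_of_nonneg_left (inner0 i h0) hp
      linarith
    · by_cases h1 : i.val = 1
      · rw [if_neg h0, if_pos h1, if_neg (by omega), if_neg (by omega), if_neg (by omega)]
        have hxi : x i = r := by simp only [hx_def]; rw [if_neg h0, if_pos h1]
        rw [hxi]
        have := mul_le_mul_of_nonneg_left (inner1 i h1) hr
        linarith
      · by_cases h2 : i.val < m'
        · rw [if_neg h0, if_neg h1, if_pos (by omega), if_neg (by omega), if_neg (by omega)]
          have hxi : x i = q := by simp only [hx_def]; rw [if_neg h0, if_neg h1, if_pos h2]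
          rw [hxi]
          have := mul_le_mul_of_nonneg_left (innerL i (by omega) h2) hq
          linarith
        · by_cases h3 : i.val = m'
          · rw [if_neg h0, if_neg h1, if_neg (by omega), if_pos h3, if_neg (by omega)]
            have hxi : x i = u := by
              simp only [hx_def]; rw [if_neg h0, if_neg h1, if_neg h2, if_pos h3]
            rw [hxi]
            have := mul_le_mul_of_nonneg_left (innerM i (Or.inl h3)) hu
            linarith
          · by_cases h4 : i.val = n - 1
            · rw [if_neg h0, if_neg h1, if_neg (by omega), if_neg h3, if_pos h4]
              have hxi : x i = u := by
                simp only [hx_def]; rw [if_neg h0, if_neg h1, if_neg h2, if_neg h3, if_pos h4]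
              rw [hxi]
              have := mul_le_mul_of_nonneg_left (innerM i (Or.inr h4)) hu
              linarith
            · rw [if_neg h0, if_neg h1, if_neg (by omega), if_neg h3, if_neg h4]
              have hxi : x i = 0 := by
                simp only [hx_def]; rw [if_neg h0, if_neg h1, if_neg h2, if_neg h3, if_neg h4]
              rw [hxi, zero_mul]
              norm_num
  have hsum : ∑ i : Fin n, ((if i.val = 0 then p * ((B:ℝ)*q + (u+u)) else 0)
      + ((if i.val = 1 then r * ((B:ℝ)*q) else 0)
      + ((if 2 ≤ i.val ∧ i.val < m' then q * (p + r) else 0)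
      + ((if i.val = m' then u * p else 0) + (if i.val = n-1 then u * p else 0)))))
      = 2*((B:ℝ)*p*q + (B:ℝ)*r*q + 2*p*u) := by
    rw [Finset.sum_add_distrib, Finset.sum_add_distrib, Finset.sum_add_distrib,
      Finset.sum_add_distrib, sum_ite_single 0 (by omega) _, sum_ite_single 1 (by omega) _,
      sum_ite_Ico 2 m' (by omega) _, sum_ite_single m' (by omega) _,
      sum_ite_single (n-1) (by omega) _]
    have e : ((m' - 2 : ℕ):ℝ) = (B:ℝ) := by rw [hB_def]
    rw [e]
    ring
  have hBcast : ((n-2*ℓ-2 : ℕ):ℝ) = (B:ℝ) := by rw [hB_def, hm_def]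
  rw [hBcast]
  calc 2*((B:ℝ)*p*q + (B:ℝ)*r*q + 2*p*u)
      = ∑ i : Fin n, ((if i.val = 0 then p * ((B:ℝ)*q + (u+u)) else 0)
        + ((if i.val = 1 then r * ((B:ℝ)*q) else 0)
        + ((if 2 ≤ i.val ∧ i.val < m' then q * (p + r) else 0)
        + ((if i.val = m' then u * p else 0) + (if i.val = n-1 then u * p else 0))))) :=
        hsum.symm
    _ ≤ ∑ i : Fin n, x i * (A *ᵥ x) i := Finset.sum_le_sum fun i _ => hper i
    _ = x ⬝ᵥ (A *ᵥ x) := rfl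
    _ ≤ specRad (cycleTuran n ℓ) * (x ⬝ᵥ x) := rayleigh_le_specRad (by omega) _ x
    _ = specRad (cycleTuran n ℓ) * (p^2 + r^2 + (B:ℝ)*q^2 + 2*u^2) := by rw [hxx]; ring_nf

lemma keyNum {m s : ℕ} (hm : 2 ≤ m) (hs : 1 ≤ s) (h : 4 ≤ m ∨ 2 ≤ s) :
    (m/2 * (m - m/2) + 4) * (m + 2*s)^2
      < (2 * ((m+2*s)/2) * ((m+2*s) - (m+2*s)/2))^2 := by
  rcases Nat.even_or_odd m with ⟨k, hk⟩ | ⟨k, hk⟩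
  · have e1 : m/2 = k := by omega
    have e2 : m - m/2 = k := by omega
    have e3 : (m+2*s)/2 = k + s := by omega
    have e4 : (m+2*s) - (m+2*s)/2 = k + s := by omega
    have e5 : m + 2*s = 2*(k+s) := by omega
    rw [e2, e4, e1, e3, e5]
    have hk1 : 1 ≤ k := by omega
    have h1 : k*k + 4 < (k+s)*(k+s) := by
      rcases h with h|h
      · have hk2 : 2 ≤ k := by omega
        nlinarith
      · nlinarith
    calc (k*k+4) * (2*(k+s))^2 < ((k+s)*(k+s)) * (2*(k+s))^2 := by
          have hpos : 0 < (2*(k+s))^2 := by positivity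
          exact Nat.mul_lt_mul_of_lt_of_le h1 (le_refl _) hpos
      _ = (2*(k+s)*(k+s))^2 := by ring
  · have e1 : m/2 = k := by omega
    have e2 : m - m/2 = k + 1 := by omega
    have e3 : (m+2*s)/2 = k + s := by omega
    have e4 : (m+2*s) - (m+2*s)/2 = k + s + 1 := by omega
    have e5 : m + 2*s = 2*(k+s)+1 := by omega
    rw [e2, e4, e1, e3, e5]
    have hk1 : 1 ≤ k := by omega
    have hu : k*k + k + 5 ≤ (k+s)*((k+s)+1) := by
      rcases h with h|h
      · have hk2 : 2 ≤ k := by omega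
        nlinarith
      · nlinarith
    have e6 : (2*(k+s)+1)^2 = 4*((k+s)*((k+s)+1)) + 1 := by ring
    have e7 : (2*(k+s)*(k+s+1))^2 = 4*(((k+s)*((k+s)+1))*((k+s)*((k+s)+1))) := by ring
    rw [e6]
    calc (k*(k+1)+4) * (4*((k+s)*((k+s)+1)) + 1)
        < 4*(((k+s)*((k+s)+1))*((k+s)*((k+s)+1))) := by nlinarith [hu]
      _ = (2*(k+s)*(k+s+1))^2 := e7.symm

/-- For `1 ≤ ℓ < t` (and `n` large enough that the graphs are defined),
`λ(C_{2t+1}(T_{n-2t,2})) < λ(C_{2ℓ+1}(T_{n-2ℓ,2}))`. -/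
theorem cycleTuran_specRad_strict_anti {n ℓ t : ℕ} (hℓ : 1 ≤ ℓ) (hlt : ℓ < t)
    (hn : 2 * t + 2 ≤ n) :
    specRad (cycleTuran n t) < specRad (cycleTuran n ℓ) := by
  have ht : 2 ≤ t := by omega
  set m : ℕ := n - 2*t with hm_def
  set a : ℕ := m/2 with ha_def
  set b : ℕ := m - a with hb_def
  set C : ℝ := ((a*b : ℕ):ℝ) + 4 with hC_def
  have hab1 : 1 ≤ a * b := Nat.one_le_iff_ne_zero.mpr (by
    have h1 : 1 ≤ a := by omega
    have h2 : 1 ≤ b := by omega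
    positivity)
  have hC5 : (5:ℝ) ≤ C := by
    rw [hC_def]
    have : (1:ℝ) ≤ ((a*b : ℕ):ℝ) := by exact_mod_cast hab1
    linarith
  obtain ⟨R, hRpos, hRsq, hRle⟩ :
      ∃ R : ℝ, 0 < R ∧ C < R^2 ∧ R ≤ specRad (cycleTuran n ℓ) := by
    by_cases hsp : m ≤ 3 ∧ t = ℓ + 1
    · by_cases hm2 : m = 2
      · have hB : (n - 2*ℓ - 2 : ℕ) = 2 := by omega
        have hL := lower_special (n := n) (ℓ := ℓ) hℓ (by omega) (by omega) 100 62 71 44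
          (by norm_num) (by norm_num) (by norm_num) (by norm_num)
        rw [hB] at hL
        norm_num at hL
        refine ⟨63608/27798, by norm_num, ?_, ?_⟩
        · have ha1 : a = 1 := by omega
          have hb1 : b = 1 := by omega
          rw [hC_def, ha1, hb1]
          norm_num
        · rw [div_le_iff₀ (by norm_num : (0:ℝ) < 27798)]
          linarith
      · have hm3 : m = 3 := by omega
        have hB : (n - 2*ℓ - 2 : ℕ) = 3 := by omega
        have hL := lower_special (n := n) (ℓ := ℓ) hℓ (by omega) (by omega) 100 72 64 37
          (by norm_num) (by norm_num) (by norm_num) (by norm_num)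
        rw [hB] at hL
        norm_num at hL
        refine ⟨80848/30210, by norm_num, ?_, ?_⟩
        · have ha1 : a = 1 := by omega
          have hb1 : b = 2 := by omega
          rw [hC_def, ha1, hb1]
          norm_num
        · rw [div_le_iff₀ (by norm_num : (0:ℝ) < 30210)]
          linarith
    · have hgen : 4 ≤ m ∨ 2 ≤ t - ℓ := by omega
      have hkey0 := keyNum (m := m) (s := t - ℓ) (by omega) (by omega) hgen
      have e : m + 2*(t-ℓ) = n - 2*ℓ := by omega
      have eab : a * b = m/2 * (m - m/2) := by rw [ha_def, hb_def]
      rw [e] at hkey0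
      have hden : (0:ℝ) < ((n - 2*ℓ : ℕ):ℝ) := by
        have : 0 < n - 2*ℓ := by omega
        exact_mod_cast this
      have hnum : 0 < 2 * ((n-2*ℓ)/2) * ((n-2*ℓ) - (n-2*ℓ)/2) := by
        apply Nat.mul_pos
        apply Nat.mul_pos
        · norm_num
        · omega
        · omega
      refine ⟨((2 * ((n-2*ℓ)/2) * ((n-2*ℓ) - (n-2*ℓ)/2) : ℕ):ℝ) / ((n - 2*ℓ : ℕ):ℝ),
        ?_, ?_, ?_⟩
      · apply div_pos _ hden
        exact_mod_cast hnum
      · rw [div_pow, lt_div_iff₀ (pow_pos hden 2)]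
        have hCc : C = ((a*b+4 : ℕ):ℝ) := by rw [hC_def]; push_cast; ring
        rw [hCc, eab]
        exact_mod_cast hkey0
      · rw [div_le_iff₀ hden]
        exact lower_gen hℓ (by omega)
  set M : ℝ := (C + R^2) / (2*R) with hM_def
  have hMpos : 0 < M := by
    apply div_pos
    · nlinarith
    · linarith
  have hMlt : M < R := by
    rw [hM_def, div_lt_iff₀ (by linarith : (0:ℝ) < 2*R)]
    nlinarith
  have hMsqC : C ≤ M^2 := by
    have h1 : M * (2*R) = C + R^2 := by
      rw [hM_def]
      field_simp
    nlinarith [h1, sq_nonneg (C - R^2), mul_pos hRpos hRpos]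
  have hM2 : (2:ℝ) ≤ M := by nlinarith [hMsqC, hC5, hMpos]
  have hup : specRad (cycleTuran n t) ≤ M := by
    apply upper_bound ht hn M hM2
    have e2 : (n-2*t)/2 * (n-2*t - (n-2*t)/2) = a * b := by
      rw [ha_def, hb_def, hm_def]
    rw [e2]
    rw [hC_def] at hMsqC
    exact hMsqC
  linarith
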